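/- Let z = (z₀, z₁) with ‖z₁‖ > α(z₀ - c) and ‖z₁‖ > -α(z₀ - c), and set τ = (α(z₀ - c) + ‖z₁‖)/2. Then the point v* = (τα + c, τ z₁/‖z₁‖) belongs to K_α(c) and is the Euclidean projection of z onto K_α(c). -/
import Mathlib

open RealInnerProductSpace

def shiftedSOC (d : ℕ) (α c : ℝ) : Set (ℝ × EuclideanSpace ℝ (Fin d)) :=
  {z | ‖z.2‖ ≤ α * (z.1 - c)}

theorem proj_generic_case (d : ℕ) (α c : ℝ) (hα : α = 1 ∨ α = -1)
    (z₀ : ℝ) (z₁ : EuclideanSpace ℝ (Fin d))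
    (h1 : α * (z₀ - c) < ‖z₁‖) (h2 : -α * (z₀ - c) < ‖z₁‖) :
    (((α * (z₀ - c) + ‖z₁‖) / 2 * α + c,
        ((α * (z₀ - c) + ‖z₁‖) / 2 / ‖z₁‖) • z₁) : ℝ × EuclideanSpace ℝ (Fin d)) ∈
      shiftedSOC d α c ∧
    ∀ y ∈ shiftedSOC d α c,
      (y.1 - ((α * (z₀ - c) + ‖z₁‖) / 2 * α + c)) *
          (z₀ - ((α * (z₀ - c) + ‖z₁‖) / 2 * α + c)) +
        ⟪y.2 - ((α * (z₀ - c) + ‖z₁‖) / 2 / ‖z₁‖) • z₁,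
          z₁ - ((α * (z₀ - c) + ‖z₁‖) / 2 / ‖z₁‖) • z₁⟫ ≤ 0 := by
  have hα2 : α * α = 1 := by rcases hα with h|h <;> simp [h]
  have hn : (0:ℝ) < ‖z₁‖ := by nlinarith
  have hne : ‖z₁‖ ≠ 0 := ne_of_gt hn
  set n : ℝ := ‖z₁‖ with hndef
  set s : ℝ := α * (z₀ - c) with hsdef
  set τ : ℝ := (s + n) / 2 with hτdef
  have hτ : 0 < τ := by rw [hτdef]; nlinarith
  constructor
  · show ‖(τ / n) • z₁‖ ≤ α * ((τ * α + c) - c)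
    rw [norm_smul, Real.norm_eq_abs, abs_of_pos (by positivity)]
    have : α * ((τ * α + c) - c) = τ := by
      have : α * (τ * α) = τ * (α * α) := by ring
      rw [show (τ * α + c) - c = τ * α by ring, this, hα2, mul_one]
    rw [this]
    rw [div_mul_cancel₀ _ hne]
  · intro y hy
    have hy2 : ‖y.2‖ ≤ α * (y.1 - c) := hy
    have hcs : ⟪y.2, z₁⟫ ≤ α * (y.1 - c) * n := by
      have h := real_inner_le_norm y.2 z₁
      nlinarith [norm_nonneg y.2]
    have key : ⟪y.2 - (τ / n) • z₁, z₁ - (τ / n) • z₁⟫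
        = ⟪y.2, z₁⟫ * (1 - τ / n) - τ * n + τ ^ 2 := by
      rw [inner_sub_left, inner_sub_right, inner_sub_right, real_inner_smul_right,
        real_inner_smul_left, real_inner_smul_left, real_inner_smul_right,
        real_inner_self_eq_norm_sq]
      rw [← hndef]
      field_simp
      ring
    rw [key]
    have hz0 : z₀ - c = α * s := by
      rw [hsdef]; rw [show α * (α * (z₀ - c)) = (α * α) * (z₀ - c) by ring, hα2]; ring
    have hexp : (y.1 - (τ * α + c)) * (z₀ - (τ * α + c))
        + ⟪y.2, z₁⟫ * (1 - τ / n) - τ * n + τ ^ 2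
        = ((n - s) / 2) * (⟪y.2, z₁⟫ / n - α * (y.1 - c)) := by
      have h1' : z₀ - (τ * α + c) = α * (s - τ) := by rw [show z₀ - (τ*α+c) = (z₀ - c) - τ*α by ring, hz0]; ring
      rw [h1']
      have : (y.1 - (τ * α + c)) * (α * (s - τ)) = (α * (y.1 - c) - τ * (α*α)) * (s - τ) := by ring
      rw [this, hα2, hτdef]
      field_simp
      ring
    calc (y.1 - (τ * α + c)) * (z₀ - (τ * α + c)) + (⟪y.2, z₁⟫ * (1 - τ / n) - τ * n + τ ^ 2)
        = ((n - s) / 2) * (⟪y.2, z₁⟫ / n - α * (y.1 - c)) := by rw [← hexp]; ring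
      _ ≤ 0 := by
          apply mul_nonpos_of_nonneg_of_nonpos
          · nlinarith
          · have : ⟪y.2, z₁⟫ / n ≤ α * (y.1 - c) := by
              rw [div_le_iff₀ hn]; exact hcs
            linarith
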